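/- Let f be a Boolean function in m variables that is not affine. Then the coset RM(1,m) + f contains at least three unbalanced words; equivalently, it has strictly fewer than 2^{m+1} - 2 balanced words. -/
import Mathlib


/-- Weight of a Boolean function: number of inputs mapped to 1. -/
def wtF {m : ℕ} (f : (Fin m → ZMod 2) → ZMod 2) : ℕ :=
  (Finset.univ.filter fun x => f x = 1).card

/-- The Reed–Muller code RM(r,m): the span of the monomial functions of degree ≤ r,
i.e. truth tables of Boolean functions in m variables of degree at most r. -/
def RM (r m : ℕ) : Submodule (ZMod 2) ((Fin m → ZMod 2) → ZMod 2) :=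
  Submodule.span (ZMod 2)
    {f | ∃ S : Finset (Fin m), S.card ≤ r ∧ f = fun x => ∏ i ∈ S, x i}

namespace RMaux

def chi (v : ZMod 2) : ℤ := if v = 1 then -1 else 1

lemma chi_add (u v : ZMod 2) : chi (u + v) = chi u * chi v := by revert u v; decide

lemma chi_inj {u v : ZMod 2} (h : chi u = chi v) : u = v := by revert u v h; decide

lemma chi_ne_zero (u : ZMod 2) : chi u ≠ 0 := by revert u; decide

lemma chi_add_one (u : ZMod 2) : chi (u + 1) = - chi u := by revert u; decide

lemma chi_mul_self (u : ZMod 2) : chi u * chi u = 1 := by revert u; decide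

variable {m : ℕ}

def dot (a x : Fin m → ZMod 2) : ZMod 2 := ∑ i, a i * x i

lemma dot_zero_right (a : Fin m → ZMod 2) : dot a 0 = 0 := by
  simp [dot]

lemma dot_add_right (a x y : Fin m → ZMod 2) : dot a (x + y) = dot a x + dot a y := by
  simp [dot, mul_add, Finset.sum_add_distrib]

lemma dot_add_left (a b x : Fin m → ZMod 2) : dot (a + b) x = dot a x + dot b x := by
  simp [dot, add_mul, Finset.sum_add_distrib]

lemma dot_smul_left (c : ZMod 2) (a x : Fin m → ZMod 2) : dot (c • a) x = c * dot a x := by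
  simp [dot, Finset.mul_sum, mul_assoc]

lemma dot_single_left (i : Fin m) (x : Fin m → ZMod 2) : dot (Pi.single i 1) x = x i := by
  simp [dot]
  rw [Finset.sum_eq_single i] <;> simp (config := {contextual := true}) [Pi.single_apply]

lemma dot_single_right (a : Fin m → ZMod 2) (i : Fin m) : dot a (Pi.single i 1) = a i := by
  simp [dot]
  rw [Finset.sum_eq_single i] <;> simp (config := {contextual := true}) [Pi.single_apply]

lemma orth (z : Fin m → ZMod 2) :
    (∑ a : Fin m → ZMod 2, chi (dot a z)) = if z = 0 then (2 ^ m : ℤ) else 0 := by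
  split_ifs with h
  · subst h; simp [dot_zero_right, chi, Finset.card_univ]
  · obtain ⟨i, hi⟩ : ∃ i, z i ≠ 0 := by
      by_contra hc; push_neg at hc; exact h (funext hc)
    have hzi : z i = 1 := by
      have : ∀ v : ZMod 2, v ≠ 0 → v = 1 := by decide
      exact this _ hi
    have key : (∑ a : Fin m → ZMod 2, chi (dot a z))
        = ∑ a : Fin m → ZMod 2, chi (dot (a + Pi.single i 1) z) :=
      Fintype.sum_equiv (Equiv.addRight (Pi.single i 1)) _ _ (fun a => rfl) |>.symm
    have neg : ∀ a : Fin m → ZMod 2, chi (dot (a + Pi.single i 1) z) = - chi (dot a z) := by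
      intro a
      rw [dot_add_left, dot_single_left, hzi, chi_add_one]
    rw [Finset.sum_congr rfl (fun a _ => neg a), Finset.sum_neg_distrib] at key
    linarith

def Wal (f : (Fin m → ZMod 2) → ZMod 2) (a : Fin m → ZMod 2) : ℤ :=
  ∑ x, chi (f x + dot a x)

lemma inversion (f : (Fin m → ZMod 2) → ZMod 2) (x : Fin m → ZMod 2) :
    (∑ a : Fin m → ZMod 2, Wal f a * chi (dot a x)) = 2 ^ m * chi (f x) := by
  have step : ∀ a y : Fin m → ZMod 2,
      chi (f y + dot a y) * chi (dot a x) = chi (f y) * chi (dot a (y + x)) := by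
    intro a y
    rw [chi_add, dot_add_right, chi_add, mul_assoc]
  calc (∑ a : Fin m → ZMod 2, Wal f a * chi (dot a x))
      = ∑ a : Fin m → ZMod 2, ∑ y, chi (f y) * chi (dot a (y + x)) := by
        refine Finset.sum_congr rfl fun a _ => ?_
        rw [Wal, Finset.sum_mul]
        exact Finset.sum_congr rfl fun y _ => step a y
    _ = ∑ y : Fin m → ZMod 2, chi (f y) * ∑ a : Fin m → ZMod 2, chi (dot a (y + x)) := by
        rw [Finset.sum_comm]
        exact Finset.sum_congr rfl fun y _ => by rw [Finset.mul_sum]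
    _ = ∑ y : Fin m → ZMod 2, chi (f y) * (if y + x = 0 then (2^m : ℤ) else 0) := by
        exact Finset.sum_congr rfl fun y _ => by rw [orth]
    _ = 2 ^ m * chi (f x) := by
        have hadd : ∀ u : ZMod 2, u + u = 0 := by decide
        have hxx : x + x = 0 := funext fun i => hadd (x i)
        rw [Finset.sum_eq_single x]
        · simp [hxx, mul_comm]
        · intro y _ hyx
          have : y + x ≠ 0 := by
            intro h0
            apply hyx
            have h2 := congrArg (· + x) h0
            simp only [add_assoc, hxx, add_zero, zero_add] at h2
            exact h2
          simp [this]
        · simp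

def aff (a : Fin m → ZMod 2) (b : ZMod 2) : (Fin m → ZMod 2) → ZMod 2 :=
  fun x => dot a x + b

def Iv (v : (Fin m → ZMod 2) → ZMod 2) : ℤ := ∑ x, chi (v x)

lemma Iv_eq (v : (Fin m → ZMod 2) → ZMod 2) : Iv v = 2 ^ m - 2 * (wtF v : ℤ) := by
  classical
  have hsplit : (∑ x : Fin m → ZMod 2, if v x = 1 then (-1 : ℤ) else 1)
      = ∑ x ∈ Finset.univ.filter (fun x => v x = 1), (-1 : ℤ)
        + ∑ x ∈ Finset.univ.filter (fun x => ¬ v x = 1), (1 : ℤ) :=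
    Finset.sum_ite _ _
  have hcard : (Finset.univ.filter fun x => ¬ v x = 1).card
      = 2 ^ m - wtF v := by
    have h := Finset.card_filter_add_card_filter_not
      (s := Finset.univ (α := Fin m → ZMod 2)) (p := fun x => v x = 1)
    simp only [Finset.card_univ] at h
    have hc : Fintype.card (Fin m → ZMod 2) = 2 ^ m := by simp
    have hw : (Finset.univ.filter fun x => v x = 1).card = wtF v := rfl
    omega
  have hle : wtF v ≤ 2 ^ m := by
    have := Finset.card_filter_le (Finset.univ (α := Fin m → ZMod 2)) (fun x => v x = 1)
    simpa [wtF, Finset.card_univ] using this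
  rw [Iv]
  simp only [chi]
  rw [hsplit, Finset.sum_const, Finset.sum_const, hcard]
  rw [show (Finset.univ.filter fun x : Fin m → ZMod 2 => v x = 1).card = wtF v from rfl]
  simp only [nsmul_eq_mul, mul_one, mul_neg_one]
  rw [Nat.cast_sub hle]
  push_cast
  ring

lemma balanced_iff (hm : 1 ≤ m) (v : (Fin m → ZMod 2) → ZMod 2) :
    wtF v = 2 ^ (m - 1) ↔ Iv v = 0 := by
  rw [Iv_eq]
  have h2 : (2 : ℤ) ^ m = 2 * 2 ^ (m - 1) := by
    rw [← pow_succ']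
    congr 1
    omega
  rw [h2]
  constructor
  · intro h; rw [h]; push_cast; ring
  · intro h
    have : (wtF v : ℤ) = 2 ^ (m - 1) := by linarith
    exact_mod_cast this

lemma aff_mem (a : Fin m → ZMod 2) (b : ZMod 2) : aff a b ∈ RM 1 m := by
  have h1 : aff a b = (∑ i, a i • (fun x : Fin m → ZMod 2 => x i))
      + b • (fun _ : Fin m → ZMod 2 => (1 : ZMod 2)) := by
    funext x
    simp [aff, dot, Finset.sum_apply, Pi.smul_apply, smul_eq_mul, mul_comm]
  rw [h1]
  apply Submodule.add_mem
  · apply Submodule.sum_mem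
    intro i _
    apply Submodule.smul_mem
    apply Submodule.subset_span
    exact ⟨{i}, by simp⟩
  · apply Submodule.smul_mem
    apply Submodule.subset_span
    exact ⟨∅, by simp⟩

def affSub (m : ℕ) : Submodule (ZMod 2) ((Fin m → ZMod 2) → ZMod 2) where
  carrier := {g | ∃ a b, g = aff a b}
  zero_mem' := ⟨0, 0, by funext x; simp [aff, dot_zero_right]; simp [dot]⟩
  add_mem' := by
    rintro g h ⟨a, b, rfl⟩ ⟨a', b', rfl⟩
    exact ⟨a + a', b + b', by funext x; simp [aff, dot_add_left]; ring⟩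
  smul_mem' := by
    rintro c g ⟨a, b, rfl⟩
    exact ⟨c • a, c * b, by funext x; simp [aff, dot_smul_left, smul_eq_mul]; ring⟩

lemma RM_sub : RM 1 m ≤ affSub m := by
  rw [RM, Submodule.span_le]
  rintro g ⟨S, hS, rfl⟩
  rcases S.eq_empty_or_nonempty with rfl | hne
  · exact ⟨0, 1, by funext x; simp [aff, dot]⟩
  · have : S.card = 1 := le_antisymm hS hne.card_pos
    obtain ⟨i, rfl⟩ := Finset.card_eq_one.mp this
    exact ⟨Pi.single i 1, 0, by funext x; simp [aff, dot_single_left]⟩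

lemma mem_RM_iff (g : (Fin m → ZMod 2) → ZMod 2) :
    g ∈ RM 1 m ↔ ∃ a b, g = aff a b :=
  ⟨fun h => RM_sub h, fun ⟨a, b, h⟩ => h ▸ aff_mem a b⟩

lemma aff_inj {a a' : Fin m → ZMod 2} {b b' : ZMod 2} (h : aff a b = aff a' b') :
    a = a' ∧ b = b' := by
  have hb : b = b' := by
    have := congrFun h 0
    simpa [aff, dot_zero_right] using this
  refine ⟨funext fun i => ?_, hb⟩
  have := congrFun h (Pi.single i 1)
  simpa [aff, dot_single_right, hb] using this

end RMaux

open RMaux in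
theorem RM1_coset_unbalanced (m : ℕ) (f : (Fin m → ZMod 2) → ZMod 2)
    (hf : f ∉ RM 1 m) :
    3 ≤ {v | (∃ c ∈ RM 1 m, v = c + f) ∧ wtF v ≠ 2 ^ (m - 1)}.ncard ∧
    {v | (∃ c ∈ RM 1 m, v = c + f) ∧ wtF v = 2 ^ (m - 1)}.ncard < 2 ^ (m + 1) - 2 := by
  classical
  rcases Nat.eq_zero_or_pos m with rfl | hm
  · exfalso
    apply hf
    have hfc : f = f 0 • (fun _ : Fin 0 → ZMod 2 => (1 : ZMod 2)) := by
      funext x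
      have hx : x = 0 := Subsingleton.elim x 0
      rw [hx]
      simp
    rw [hfc]
    exact Submodule.smul_mem _ _ (Submodule.subset_span ⟨∅, by simp⟩)
  have hadd2 : ∀ u : ZMod 2, u + u = 0 := by decide
  -- two distinct nonzero Walsh coefficients
  have hex : ∃ a₁ a₂ : Fin m → ZMod 2, a₁ ≠ a₂ ∧ Wal f a₁ ≠ 0 ∧ Wal f a₂ ≠ 0 := by
    by_contra hc
    have huniq : ∀ a₁ a₂ : Fin m → ZMod 2, Wal f a₁ ≠ 0 → Wal f a₂ ≠ 0 → a₁ = a₂ := by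
      intro a₁ a₂ h1 h2
      by_contra hne
      exact hc ⟨a₁, a₂, hne, h1, h2⟩
    have h2m : (2 : ℤ) ^ m ≠ 0 := by positivity
    by_cases hz : ∀ a : Fin m → ZMod 2, Wal f a = 0
    · have hinv := inversion f 0
      rw [Finset.sum_eq_zero (fun a _ => by rw [hz a]; ring)] at hinv
      exact (mul_ne_zero h2m (chi_ne_zero (f 0))) hinv.symm
    · push_neg at hz
      obtain ⟨a₀, ha₀⟩ := hz
      apply hf
      have heq : ∀ x, Wal f a₀ * chi (dot a₀ x) = 2 ^ m * chi (f x) := by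
        intro x
        have hinv := inversion f x
        rw [Finset.sum_eq_single a₀] at hinv
        · exact hinv
        · intro a _ hne
          have : Wal f a = 0 := by
            by_contra h
            exact hne (huniq a a₀ h ha₀)
          rw [this]; ring
        · intro h; exact absurd (Finset.mem_univ a₀) h
      have hconst : ∀ x, 2 ^ m * chi (f x + dot a₀ x) = Wal f a₀ := by
        intro x
        have h1 : Wal f a₀ * (chi (dot a₀ x) * chi (dot a₀ x))
            = 2 ^ m * (chi (f x) * chi (dot a₀ x)) := by
          rw [← mul_assoc, heq x]; ring
        calc 2 ^ m * chi (f x + dot a₀ x) = 2 ^ m * (chi (f x) * chi (dot a₀ x)) := by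
              rw [chi_add]
          _ = Wal f a₀ * (chi (dot a₀ x) * chi (dot a₀ x)) := h1.symm
          _ = Wal f a₀ := by rw [chi_mul_self, mul_one]
      have hval : ∀ x, f x + dot a₀ x = f 0 + dot a₀ 0 := by
        intro x
        apply chi_inj
        exact mul_left_cancel₀ h2m ((hconst x).trans (hconst 0).symm)
      rw [mem_RM_iff]
      refine ⟨a₀, f 0, funext fun x => ?_⟩
      have hx := hval x
      rw [dot_zero_right, add_zero] at hx
      calc f x = f x + (dot a₀ x + dot a₀ x) := by rw [hadd2, add_zero]
        _ = (f x + dot a₀ x) + dot a₀ x := by ring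
        _ = f 0 + dot a₀ x := by rw [hx]
        _ = aff a₀ (f 0) x := by rw [aff]; ring
  obtain ⟨a₁, a₂, hne, h1, h2⟩ := hex
  have hIv : ∀ (a : Fin m → ZMod 2) (b : ZMod 2),
      Iv (aff a b + f) = chi b * Wal f a := by
    intro a b
    rw [Iv, Wal, Finset.mul_sum]
    refine Finset.sum_congr rfl fun x _ => ?_
    have hab : (aff a b + f) x = (f x + dot a x) + b := by
      simp [aff]; ring
    rw [hab, chi_add, mul_comm]
  have hmemU : ∀ (a : Fin m → ZMod 2) (b : ZMod 2), Wal f a ≠ 0 →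
      (aff a b + f) ∈ {v | (∃ c ∈ RM 1 m, v = c + f) ∧ wtF v ≠ 2 ^ (m - 1)} := by
    intro a b hW
    refine ⟨⟨aff a b, aff_mem a b, rfl⟩, ?_⟩
    intro hbal
    rw [balanced_iff hm, hIv] at hbal
    exact (mul_ne_zero (chi_ne_zero b) hW) hbal
  have hd12 : aff a₁ 0 + f ≠ aff a₂ 0 + f :=
    fun h => hne (aff_inj (add_right_cancel h)).1
  have hd13 : aff a₁ (0 : ZMod 2) + f ≠ aff a₁ 1 + f := by
    intro h
    have := (aff_inj (add_right_cancel h)).2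
    simp at this
  have hd23 : aff a₂ (0 : ZMod 2) + f ≠ aff a₁ 1 + f := by
    intro h
    have := (aff_inj (add_right_cancel h)).2
    simp at this
  have hsub : ({aff a₁ 0 + f, aff a₂ 0 + f, aff a₁ 1 + f} : Set _)
      ⊆ {v | (∃ c ∈ RM 1 m, v = c + f) ∧ wtF v ≠ 2 ^ (m - 1)} := by
    intro v hv
    rcases hv with rfl | rfl | rfl
    · exact hmemU a₁ 0 h1
    · exact hmemU a₂ 0 h2
    · exact hmemU a₁ 1 h1
  have h3 : ({aff a₁ 0 + f, aff a₂ 0 + f, aff a₁ 1 + f} : Set _).ncard = 3 := by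
    rw [Set.ncard_insert_of_notMem (by simp [hd12, hd13]),
      Set.ncard_pair hd23]
  have hU3 : 3 ≤ {v | (∃ c ∈ RM 1 m, v = c + f) ∧ wtF v ≠ 2 ^ (m - 1)}.ncard :=
    h3 ▸ Set.ncard_le_ncard hsub (Set.toFinite _)
  refine ⟨hU3, ?_⟩
  have hBU : {v | (∃ c ∈ RM 1 m, v = c + f) ∧ wtF v = 2 ^ (m - 1)}
      ∪ {v | (∃ c ∈ RM 1 m, v = c + f) ∧ wtF v ≠ 2 ^ (m - 1)}
      = {v | ∃ c ∈ RM 1 m, v = c + f} := by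
    ext v
    simp only [Set.mem_union, Set.mem_setOf_eq]
    constructor
    · rintro (⟨h, _⟩ | ⟨h, _⟩) <;> exact h
    · intro h
      by_cases hb : wtF v = 2 ^ (m - 1)
      · exact Or.inl ⟨h, hb⟩
      · exact Or.inr ⟨h, hb⟩
  have hdisj : Disjoint {v | (∃ c ∈ RM 1 m, v = c + f) ∧ wtF v = 2 ^ (m - 1)}
      {v | (∃ c ∈ RM 1 m, v = c + f) ∧ wtF v ≠ 2 ^ (m - 1)} := by
    rw [Set.disjoint_left]
    rintro v ⟨_, h⟩ ⟨_, h'⟩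
    exact h' h
  have hCcard : {v | ∃ c ∈ RM 1 m, v = c + f}.ncard = 2 ^ (m + 1) := by
    have hC : {v | ∃ c ∈ RM 1 m, v = c + f}
        = (fun c => c + f) '' Set.range (fun p : (Fin m → ZMod 2) × ZMod 2 => aff p.1 p.2) := by
      ext v
      simp only [Set.mem_image, Set.mem_range, Set.mem_setOf_eq]
      constructor
      · rintro ⟨c, hc, rfl⟩
        obtain ⟨a, b, rfl⟩ := (mem_RM_iff c).mp hc
        exact ⟨aff a b, ⟨⟨a, b⟩, rfl⟩, rfl⟩
      · rintro ⟨c, ⟨⟨a, b⟩, rfl⟩, rfl⟩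
        exact ⟨aff a b, (mem_RM_iff _).mpr ⟨a, b, rfl⟩, rfl⟩
    rw [hC, Set.ncard_image_of_injective _ (add_left_injective f),
      ← Set.image_univ,
      Set.ncard_image_of_injective _
        (fun p q h => Prod.ext (aff_inj h).1 (aff_inj h).2),
      Set.ncard_univ, Nat.card_eq_fintype_card]
    simp [pow_succ]
  have hBC : {v | (∃ c ∈ RM 1 m, v = c + f) ∧ wtF v = 2 ^ (m - 1)}.ncard
      + {v | (∃ c ∈ RM 1 m, v = c + f) ∧ wtF v ≠ 2 ^ (m - 1)}.ncard
      = {v | ∃ c ∈ RM 1 m, v = c + f}.ncard := by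
    rw [← hBU, Set.ncard_union_eq hdisj (Set.toFinite _) (Set.toFinite _)]
  have h4 : 4 ≤ 2 ^ (m + 1) := by
    calc (4 : ℕ) = 2 ^ 2 := rfl
      _ ≤ 2 ^ (m + 1) := Nat.pow_le_pow_right (by norm_num) (by omega)
  omega
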